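/- For every FO-identifiable 3-valued structure S and every 2-valued structure S♮: S♮ ∈ γ(S) if and only if S♮ ⊨ γ̂(S), where γ̂(S) = F ∧ ξ^S is the first-order characteristic formula of S. -/

import Mathlib

/-!
Common framework: 2-valued and 3-valued logical structures over a relational
vocabulary with a designated binary equality predicate, embedding, first-order
formulas with transitive closure and their Tarskian semantics, characteristic
formulas, canonical abstraction.
-/

namespace HeapAbs

/-- The three truth values 0, 1/2, 1. -/
inductive TV : Type
  | zero
  | half
  | one
  deriving DecidableEq

/-- Information order on truth values: `l1 ⊑ l2` iff `l1 = l2` or `l2 = 1/2`. -/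
def TV.le (a b : TV) : Prop := a = b ∨ b = TV.half

/-- `v` is the least upper bound (join) of the set `A` in the information order. -/
def TV.IsJoin (A : Set TV) (v : TV) : Prop :=
  (∀ a ∈ A, TV.le a v) ∧ ∀ w, (∀ a ∈ A, TV.le a w) → TV.le v w

/-- A (relational) vocabulary: a set of predicate symbols with arities and a
designated binary equality symbol. -/
structure Voc : Type 1 where
  rel : Type
  ar : rel → ℕ
  eqr : rel
  eq_ar : ar eqr = 2

/-- The pair `(u, v)` as a tuple (used for binary predicates). -/
def pair {α : Type _} {n : ℕ} (u v : α) : Fin n → α :=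
  fun i => if (i : ℕ) = 0 then u else v

/-- A 3-valued logical structure over the vocabulary `σ`. -/
structure Str3 (σ : Voc) : Type 1 where
  U : Type
  ι : (r : σ.rel) → (Fin (σ.ar r) → U) → TV
  eq_refl : ∀ u : U, ι σ.eqr (pair u u) ≠ TV.zero
  eq_ne : ∀ u v : U, u ≠ v → ι σ.eqr (pair u v) = TV.zero

/-- A 2-valued logical structure over `σ`: all predicate values are definite and
the equality symbol is interpreted as true equality. -/
structure Str2 (σ : Voc) : Type 1 where
  U : Type
  ι : (r : σ.rel) → (Fin (σ.ar r) → U) → Bool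
  eq_iff : ∀ u v : U, ι σ.eqr (pair u v) = true ↔ u = v

/-- The value of a predicate of a 2-valued structure, seen as a truth value. -/
def Str2.tv {σ : Voc} (C : Str2 σ) (r : σ.rel) (t : Fin (σ.ar r) → C.U) : TV :=
  if C.ι r t then TV.one else TV.zero

/-- `f` embeds the 2-valued structure `C` into the 3-valued structure `S`:
`f` is surjective and every predicate value of `C` is ⊑ the corresponding
value of `S`. -/
def Embeds {σ : Voc} (C : Str2 σ) (S : Str3 σ) (f : C.U → S.U) : Prop :=
  Function.Surjective f ∧
    ∀ (r : σ.rel) (t : Fin (σ.ar r) → C.U), TV.le (C.tv r t) (S.ι r (f ∘ t))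

/-- First-order formulas with transitive closure over vocabulary `σ`, with
free variables drawn from `V`. -/
inductive Fml (σ : Voc) : Type → Type 1 where
  | tru {V : Type} : Fml σ V
  | atom {V : Type} (r : σ.rel) (ts : Fin (σ.ar r) → V) : Fml σ V
  | not {V : Type} : Fml σ V → Fml σ V
  | or {V : Type} : Fml σ V → Fml σ V → Fml σ V
  | ex {V : Type} : Fml σ (Option V) → Fml σ V
  | tc {V : Type} (φ : Fml σ (Option (Option V))) (a b : V) : Fml σ V

/-- Tarskian satisfaction of a formula in a 2-valued structure under an
assignment `ρ` of the free variables. -/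
def Str2.Sat {σ : Voc} (C : Str2 σ) : {V : Type} → (V → C.U) → Fml σ V → Prop
  | _, _, .tru => True
  | _, ρ, .atom r ts => C.ι r (ρ ∘ ts) = true
  | _, ρ, .not φ => ¬ C.Sat ρ φ
  | _, ρ, .or φ ψ => C.Sat ρ φ ∨ C.Sat ρ ψ
  | _, ρ, .ex φ => ∃ m : C.U, C.Sat (fun v => Option.elim v m ρ) φ
  | _, ρ, .tc φ a b =>
      Relation.TransGen
        (fun x y => C.Sat (fun v => Option.elim v y (fun v' => Option.elim v' x ρ)) φ)
        (ρ a) (ρ b)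

/-- Satisfaction of a closed formula. -/
def SatC {σ : Voc} (C : Str2 σ) (φ : Fml σ Empty) : Prop :=
  C.Sat (fun x => x.elim) φ

namespace Fml

def fls {σ : Voc} {V : Type} : Fml σ V := .not .tru

def and {σ : Voc} {V : Type} (φ ψ : Fml σ V) : Fml σ V := .not (.or (.not φ) (.not ψ))

def imp {σ : Voc} {V : Type} (φ ψ : Fml σ V) : Fml σ V := .or (.not φ) ψ

def all {σ : Voc} {V : Type} (φ : Fml σ (Option V)) : Fml σ V := .not (.ex (.not φ))

def conj {σ : Voc} {V : Type} (l : List (Fml σ V)) : Fml σ V := l.foldr .and .tru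

def disj {σ : Voc} {V : Type} (l : List (Fml σ V)) : Fml σ V := l.foldr .or .fls

/-- Renaming of free variables. -/
def map {σ : Voc} : {V W : Type} → (V → W) → Fml σ V → Fml σ W
  | _, _, _, .tru => .tru
  | _, _, g, .atom r ts => .atom r (g ∘ ts)
  | _, _, g, .not φ => .not (φ.map g)
  | _, _, g, .or φ ψ => .or (φ.map g) (ψ.map g)
  | _, _, g, .ex φ => .ex (φ.map (Option.map g))
  | _, _, g, .tc φ a b => .tc (φ.map (Option.map (Option.map g))) (g a) (g b)

end Fml

/-- The characteristic formula `p^B` of the truth value `B` for the predicate `p`: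
`p^0 := ¬p`, `p^1 := p`, `p^{1/2} := true`. -/
def charFml {σ : Voc} {V : Type} (p : σ.rel) (ts : Fin (σ.ar p) → V) : TV → Fml σ V
  | TV.zero => .not (.atom p ts)
  | TV.one => .atom p ts
  | TV.half => .tru

/-- `node` is a family of node formulas (one per node of `S`, with a single free
variable `w`) witnessing that `S` is FO-identifiable: for every 2-valued `C`
embedding into `S` via `f` and every concrete node `uh`, `f uh = u` iff `C`
satisfies `node u` under `[w ↦ uh]`. -/
def IsNodeFamily {σ : Voc} (S : Str3 σ) (node : S.U → Fml σ Unit) : Prop :=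
  ∀ (C : Str2 σ) (f : C.U → S.U), Embeds C S f →
    ∀ (uh : C.U) (u : S.U), f uh = u ↔ C.Sat (fun _ => uh) (node u)

/-- `S` is FO-identifiable. -/
def FOIdentifiable {σ : Voc} (S : Str3 σ) : Prop :=
  ∃ node : S.U → Fml σ Unit, IsNodeFamily S node

/-- Mutual exclusivity of a family of node formulas: in every 2-valued structure
that embeds into `S`, every concrete node satisfies at most one node formula. -/
def MutExcl {σ : Voc} (S : Str3 σ) (node : S.U → Fml σ Unit) : Prop :=
  ∀ C : Str2 σ, (∃ f : C.U → S.U, Embeds C S f) →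
    ∀ (uh : C.U) (u1 u2 : S.U), u1 ≠ u2 →
      ¬ (C.Sat (fun _ => uh) (node u1) ∧ C.Sat (fun _ => uh) (node u2))

/-- `S` is a bounded structure: any two distinct nodes are distinguished by a
unary predicate having distinct definite values on them. -/
def Bounded {σ : Voc} (S : Str3 σ) : Prop :=
  ∀ u1 u2 : S.U, u1 ≠ u2 →
    ∃ p : σ.rel, σ.ar p = 1 ∧
      S.ι p (fun _ => u1) ≠ S.ι p (fun _ => u2) ∧
      S.ι p (fun _ => u1) ≠ TV.half ∧ S.ι p (fun _ => u2) ≠ TV.half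

/-- The node formula `node^S_u(w) := ⋀_{p unary} p^{ι^S(p)(u)}(w)`. -/
noncomputable def boundedNode {σ : Voc} [Fintype σ.rel] (S : Str3 σ) (u : S.U) : Fml σ Unit :=
  Fml.conj
    (((Finset.univ : Finset {p : σ.rel // σ.ar p = 1}).toList).map
      (fun p => charFml p.1 (fun _ => ()) (S.ι p.1 (fun _ => u))))

/-- The conjunction `⋀_j node_{t j}(w_j)` over the components of a tuple of
abstract nodes, as a formula with free variables `w_1, …, w_n`. -/
def nodeTuple {σ : Voc} (S : Str3 σ) (node : S.U → Fml σ Unit) {n : ℕ}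
    (t : Fin n → S.U) : Fml σ (Fin n) :=
  Fml.conj (List.ofFn fun j : Fin n => (node (t j)).map (fun _ => j))

/-- Universal closure of a formula with `n` free variables. -/
def closeAll {σ : Voc} : {n : ℕ} → Fml σ (Fin n) → Fml σ Empty
  | 0, φ => φ.map Fin.elim0
  | _ + 1, φ =>
      closeAll (Fml.all (φ.map (fun i => Fin.lastCases none (fun j => some j) i)))

/-- Existential closure of a formula with `n` free variables. -/
def closeEx {σ : Voc} : {n : ℕ} → Fml σ (Fin n) → Fml σ Empty
  | 0, φ => φ.map Fin.elim0
  | _ + 1, φ =>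
      closeEx (Fml.ex (φ.map (fun i => Fin.lastCases none (fun j => some j) i)))

/-- `∃ v : node_u(v)`. -/
noncomputable def existsNode {σ : Voc} (S : Str3 σ) (node : S.U → Fml σ Unit) (u : S.U) :
    Fml σ Empty :=
  .ex ((node u).map (fun _ => (none : Option Empty)))

/-- The totality formula `∀ w : ⋁_i node_{u_i}(w)`. -/
noncomputable def xiTotal {σ : Voc} (S : Str3 σ) [Fintype S.U] (node : S.U → Fml σ Unit) :
    Fml σ Empty :=
  Fml.all (Fml.disj
    (((Finset.univ : Finset S.U).toList).map
      (fun u => (node u).map (fun _ => (none : Option Empty)))))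

/-- The nullary characteristic formula `⋀_{p nullary} p^{ι^S(p)()}`. -/
noncomputable def xiNullary {σ : Voc} [Fintype σ.rel] (S : Str3 σ) : Fml σ Empty :=
  Fml.conj
    (((Finset.univ : Finset σ.rel).toList).map (fun p =>
      if h : σ.ar p = 0 then
        charFml p (fun i => Fin.elim0 (Fin.cast h i))
          (S.ι p (fun i => Fin.elim0 (Fin.cast h i)))
      else .tru))

/-- The predicate characteristic formula
`∀ w1 … wr : ⋀_{tuples ū} ((⋀_j node_{ū j}(w_j)) → p^{ι^S(p)(ū)}(w̄))`. -/
noncomputable def xiPred {σ : Voc} (S : Str3 σ) [Fintype S.U] (node : S.U → Fml σ Unit)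
    (p : σ.rel) : Fml σ Empty :=
  closeAll (Fml.conj
    (((Finset.univ : Finset (Fin (σ.ar p) → S.U)).toList).map
      (fun t => Fml.imp (nodeTuple S node t)
        (charFml p (fun j => j) (S.ι p t)))))

/-- Conjunction of the predicate characteristic formulas over all predicates of
arity ≥ 1. -/
noncomputable def xiPredAll {σ : Voc} [Fintype σ.rel] (S : Str3 σ) [Fintype S.U]
    (node : S.U → Fml σ Unit) : Fml σ Empty :=
  Fml.conj
    (((Finset.univ : Finset σ.rel).toList).map (fun p =>
      if σ.ar p = 0 then .tru else xiPred S node p))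

/-- The first-order characteristic formula `ξ^S` of `S` (w.r.t. the node
formulas `node`). -/
noncomputable def xi {σ : Voc} [Fintype σ.rel] (S : Str3 σ) [Fintype S.U]
    (node : S.U → Fml σ Unit) : Fml σ Empty :=
  (Fml.conj (((Finset.univ : Finset S.U).toList).map (existsNode S node))).and
    ((xiTotal S node).and ((xiNullary S).and (xiPredAll S node)))

/-- The concretization `γ(S)`: the 2-valued structures that embed into `S` and
satisfy the integrity formula `F`. -/
def gammaSet {σ : Voc} (F : Fml σ Empty) (S : Str3 σ) : Set (Str2 σ) :=
  {C | (∃ f : C.U → S.U, Embeds C S f) ∧ SatC C F}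

/-- `S` is the canonical abstraction of the 2-valued structure `C` via `blur`:
`blur` is a surjective embedding that identifies exactly the concrete nodes with
equal canonical names (the values of the unary predicates), and every abstract
predicate value is the join of the concrete values it represents. -/
def IsCanonAbs {σ : Voc} (C : Str2 σ) (S : Str3 σ) (blur : C.U → S.U) : Prop :=
  Embeds C S blur ∧
    (∀ u v : C.U, blur u = blur v ↔
      ∀ p : σ.rel, σ.ar p = 1 → C.ι p (fun _ => u) = C.ι p (fun _ => v)) ∧
    ∀ (p : σ.rel) (t' : Fin (σ.ar p) → S.U),
      TV.IsJoin {b | ∃ t : Fin (σ.ar p) → C.U, blur ∘ t = t' ∧ C.tv p t = b}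
        (S.ι p t')

/-- `S` is an image of canonical abstraction. -/
def ICA {σ : Voc} (S : Str3 σ) : Prop :=
  ∃ (C : Str2 σ) (blur : C.U → S.U), IsCanonAbs C S blur

/-- The concretization of `S` under canonical abstraction. -/
def gammaC {σ : Voc} (F : Fml σ Empty) (S : Str3 σ) : Set (Str2 σ) :=
  {C | (∃ blur : C.U → S.U, IsCanonAbs C S blur) ∧ SatC C F}

/-- `node` is a family of node formulas witnessing canonical-FO-identifiability
of `S`. -/
def IsCanonNodeFamily {σ : Voc} (S : Str3 σ) (node : S.U → Fml σ Unit) : Prop :=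
  ∀ (C : Str2 σ) (blur : C.U → S.U), IsCanonAbs C S blur →
    ∀ (uh : C.U) (u : S.U), blur uh = u ↔ C.Sat (fun _ => uh) (node u)

/-- `τ^S[p]`: for every tuple where `p` has value 1/2, there are concrete
tuples (satisfying the node formulas) on which `p` holds, resp., fails. -/
noncomputable def tauPred {σ : Voc} (S : Str3 σ) [Fintype S.U] (node : S.U → Fml σ Unit)
    (p : σ.rel) : Fml σ Empty :=
  Fml.conj
    (((((Finset.univ : Finset (Fin (σ.ar p) → S.U)).toList).filter
        (fun t => decide (S.ι p t = TV.half))).map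
      (fun t =>
        (closeEx ((nodeTuple S node t).and (.atom p (fun j => j)))).and
          (closeEx ((nodeTuple S node t).and (.not (.atom p (fun j => j))))))))

/-- `τ^S := ξ^S ∧ ⋀_{p of arity ≥ 2} τ^S[p]`. -/
noncomputable def tau {σ : Voc} [Fintype σ.rel] (S : Str3 σ) [Fintype S.U]
    (node : S.U → Fml σ Unit) : Fml σ Empty :=
  (xi S node).and
    (Fml.conj (((Finset.univ : Finset σ.rel).toList).map (fun p =>
      if 2 ≤ σ.ar p then tauPred S node p else .tru)))

/-- Isomorphism of 3-valued structures. -/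
def Iso3 {σ : Voc} (S1 S2 : Str3 σ) : Prop :=
  ∃ e : S1.U ≃ S2.U,
    ∀ (p : σ.rel) (t : Fin (σ.ar p) → S1.U), S1.ι p t = S2.ι p (e ∘ t)

/-- Satisfaction of the NP (existential monadic second-order) characteristic
formula `ψ^S` of `S` in the 2-valued structure `C`: there exist sets `V_u`
(one per node `u` of `S`) that are nonempty, pairwise disjoint, and cover `C`,
such that the nullary and the predicate characteristic conjuncts hold with
`node_{u}(w) := w ∈ V_u`. -/
def SatNP {σ : Voc} (S : Str3 σ) (C : Str2 σ) : Prop :=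
  ∃ V : S.U → Set C.U,
    (∀ u : S.U, ∃ w, w ∈ V u) ∧
    (∀ u1 u2 : S.U, u1 ≠ u2 →
      ∀ w1 ∈ V u1, ∀ w2 ∈ V u2, ¬ C.ι σ.eqr (pair w1 w2) = true) ∧
    (∀ w : C.U, ∃ u : S.U, w ∈ V u) ∧
    (∀ (p : σ.rel) (h : σ.ar p = 0),
      TV.le (C.tv p (fun i => Fin.elim0 (Fin.cast h i)))
        (S.ι p (fun i => Fin.elim0 (Fin.cast h i)))) ∧
    (∀ (p : σ.rel), 1 ≤ σ.ar p →
      ∀ (t : Fin (σ.ar p) → C.U) (us : Fin (σ.ar p) → S.U),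
        (∀ j, t j ∈ V (us j)) → TV.le (C.tv p t) (S.ι p us))


section Lemmas

variable {σ : Voc} (C : Str2 σ)

lemma sat_map {V W : Type} (φ : Fml σ V) (g : V → W) (ρ : W → C.U) :
    C.Sat ρ (φ.map g) ↔ C.Sat (ρ ∘ g) φ := by
  induction φ generalizing W with
  | tru => simp [Fml.map, Str2.Sat]
  | atom r ts => exact Iff.rfl
  | not φ ih => simp only [Fml.map, Str2.Sat]; rw [ih]
  | or φ ψ ih ih' => simp only [Fml.map, Str2.Sat]; rw [ih, ih']
  | ex φ ih =>
      simp only [Fml.map, Str2.Sat]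
      refine exists_congr fun m => ?_
      rw [ih]
      have h : ((fun v => Option.elim v m ρ) ∘ Option.map g) =
          fun v => Option.elim v m (ρ ∘ g) := by
        funext v; cases v <;> rfl
      rw [h]
  | tc φ a b ih =>
      simp only [Fml.map, Str2.Sat]
      have hrel : (fun x y => C.Sat
            (fun v => Option.elim v y fun v' => Option.elim v' x ρ)
            (φ.map (Option.map (Option.map g)))) =
          fun x y => C.Sat
            (fun v => Option.elim v y fun v' => Option.elim v' x (ρ ∘ g)) φ := by
        funext x y
        rw [ih]
        have h : ((fun v => Option.elim v y fun v' => Option.elim v' x ρ) ∘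
            Option.map (Option.map g)) =
            fun v => Option.elim v y fun v' => Option.elim v' x (ρ ∘ g) := by
          funext v
          rcases v with _ | v
          · rfl
          · rcases v with _ | v <;> rfl
        rw [h]
      rw [hrel]
      exact Iff.rfl

lemma sat_and {V : Type} (ρ : V → C.U) (φ ψ : Fml σ V) :
    C.Sat ρ (φ.and ψ) ↔ C.Sat ρ φ ∧ C.Sat ρ ψ := by
  simp only [Fml.and, Str2.Sat]; tauto

lemma sat_imp {V : Type} (ρ : V → C.U) (φ ψ : Fml σ V) :
    C.Sat ρ (φ.imp ψ) ↔ (C.Sat ρ φ → C.Sat ρ ψ) := by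
  simp only [Fml.imp, Str2.Sat]; tauto

lemma sat_conj {V : Type} (ρ : V → C.U) (l : List (Fml σ V)) :
    C.Sat ρ (Fml.conj l) ↔ ∀ φ ∈ l, C.Sat ρ φ := by
  induction l with
  | nil => simp [Fml.conj, Str2.Sat]
  | cons a l ih =>
      simp only [Fml.conj, List.foldr_cons] at *
      rw [sat_and, ih]
      simp

lemma sat_disj {V : Type} (ρ : V → C.U) (l : List (Fml σ V)) :
    C.Sat ρ (Fml.disj l) ↔ ∃ φ ∈ l, C.Sat ρ φ := by
  induction l with
  | nil => simp [Fml.disj, Fml.fls, Str2.Sat]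
  | cons a l ih =>
      simp only [Fml.disj, List.foldr_cons] at *
      have hor : C.Sat ρ (a.or (List.foldr Fml.or Fml.fls l)) ↔
          C.Sat ρ a ∨ C.Sat ρ (List.foldr Fml.or Fml.fls l) := Iff.rfl
      rw [hor]
      constructor
      · intro h
        rcases h with h | h
        · exact ⟨a, by simp, h⟩
        · obtain ⟨φ, hφ, hs⟩ := ih.mp h
          exact ⟨φ, by simp [hφ], hs⟩
      · rintro ⟨φ, hφ, hs⟩
        rcases List.mem_cons.mp hφ with rfl | hφ
        · exact Or.inl hs
        · exact Or.inr (ih.mpr ⟨φ, hφ, hs⟩)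

lemma sat_all {V : Type} (ρ : V → C.U) (φ : Fml σ (Option V)) :
    C.Sat ρ (Fml.all φ) ↔ ∀ m : C.U, C.Sat (fun v => Option.elim v m ρ) φ := by
  simp only [Fml.all, Str2.Sat]
  push_neg
  simp [not_not]

lemma comp_lastCases {n : ℕ} {α : Type _} (ρ : Fin n → α) (m : α) :
    ((fun v => Option.elim v m ρ) ∘
        fun i : Fin (n + 1) => Fin.lastCases none (fun j => some j) i) =
      Fin.snoc ρ m := by
  funext i
  refine Fin.lastCases ?_ ?_ i
  · simp [Function.comp]
  · intro j
    simp [Function.comp]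

lemma sat_closeAll : ∀ {n : ℕ} (φ : Fml σ (Fin n)),
    SatC C (closeAll φ) ↔ ∀ ρ : Fin n → C.U, C.Sat ρ φ
  | 0, φ => by
      simp only [closeAll, SatC]
      rw [sat_map]
      constructor
      · intro h ρ
        have : ρ = ((fun x : Empty => x.elim) ∘ Fin.elim0) :=
          funext fun i => i.elim0
        rw [this]; exact h
      · intro h; exact h _
  | n + 1, φ => by
      simp only [closeAll]
      rw [sat_closeAll]
      constructor
      · intro h ρ
        have h2 := (sat_all C (Fin.init ρ) _).mp (h (Fin.init ρ)) (ρ (Fin.last n))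
        rw [sat_map, comp_lastCases, Fin.snoc_init_self] at h2
        exact h2
      · intro h ρ
        rw [sat_all]
        intro m
        rw [sat_map, comp_lastCases]
        exact h _

lemma sat_charFml {V : Type} (ρ : V → C.U) (p : σ.rel) (ts : Fin (σ.ar p) → V)
    (B : TV) :
    C.Sat ρ (charFml p ts B) ↔ TV.le (C.tv p (ρ ∘ ts)) B := by
  cases B <;> cases h : C.ι p (ρ ∘ ts) <;>
    simp [charFml, Str2.Sat, Str2.tv, TV.le, h]

lemma sat_nodeTuple {n : ℕ} (S : Str3 σ) (node : S.U → Fml σ Unit)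
    (t : Fin n → S.U) (ρ : Fin n → C.U) :
    C.Sat ρ (nodeTuple S node t) ↔ ∀ j, C.Sat (fun _ => ρ j) (node (t j)) := by
  rw [nodeTuple, sat_conj]
  constructor
  · intro h j
    have := h _ (List.mem_ofFn.mpr ⟨j, rfl⟩)
    rw [sat_map] at this
    exact this
  · intro h φ hφ
    obtain ⟨j, rfl⟩ := List.mem_ofFn.mp hφ
    rw [sat_map]
    exact h j

lemma empty_tuple_eq {α : Type _} {k : ℕ} (h : k = 0) (t t' : Fin k → α) :
    t = t' :=
  funext fun i => absurd i.2 (by omega)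

end Lemmas

/-- for every FO-identifiable 3-valued structure `S` (with node
formulas `node`) and every 2-valued structure `C`: `C ∈ γ(S)` iff
`C ⊨ γ̂(S) = F ∧ ξ^S`. -/
theorem mem_gamma_iff_sat_gammaHat {σ : Voc} [Fintype σ.rel] (F : Fml σ Empty)
    (S : Str3 σ) [Fintype S.U] (node : S.U → Fml σ Unit)
    (hnode : IsNodeFamily S node) (C : Str2 σ) :
    C ∈ gammaSet F S ↔ SatC C (F.and (xi S node)) := by
  constructor
  · intro h
    obtain ⟨⟨f, hf⟩, hF⟩ := h
    obtain ⟨hsurj, hval⟩ := hf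
    rw [SatC, sat_and]
    refine ⟨hF, ?_⟩
    rw [xi, sat_and]
    constructor
    · -- existsNode conjuncts
      rw [sat_conj]
      intro φ hφ
      rw [List.mem_map] at hφ
      obtain ⟨u, -, rfl⟩ := hφ
      obtain ⟨w, hw⟩ := hsurj u
      rw [existsNode]
      refine ⟨w, ?_⟩
      rw [sat_map]
      exact (hnode C f ⟨hsurj, hval⟩ w u).mp hw
    rw [sat_and]
    constructor
    · -- totality
      rw [xiTotal, sat_all]
      intro m
      rw [sat_disj]
      refine ⟨_, List.mem_map.mpr ⟨f m,
        Finset.mem_toList.mpr (Finset.mem_univ _), rfl⟩, ?_⟩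
      rw [sat_map]
      exact (hnode C f ⟨hsurj, hval⟩ m (f m)).mp rfl
    rw [sat_and]
    constructor
    · -- nullary
      rw [xiNullary, sat_conj]
      intro φ hφ
      rw [List.mem_map] at hφ
      obtain ⟨p, -, rfl⟩ := hφ
      by_cases h : σ.ar p = 0
      · rw [dif_pos h, sat_charFml]
        have h2 := hval p (fun i => Fin.elim0 (Fin.cast h i))
        rw [empty_tuple_eq h (f ∘ fun i => Fin.elim0 (Fin.cast h i))
          (fun i => Fin.elim0 (Fin.cast h i))] at h2
        rw [empty_tuple_eq h ((fun x : Empty => x.elim) ∘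
          fun i => Fin.elim0 (Fin.cast h i)) (fun i => Fin.elim0 (Fin.cast h i))]
        exact h2
      · rw [dif_neg h]
        trivial
    · -- predicate conjuncts
      rw [xiPredAll, sat_conj]
      intro φ hφ
      rw [List.mem_map] at hφ
      obtain ⟨p, -, rfl⟩ := hφ
      by_cases h : σ.ar p = 0
      · rw [if_pos h]; trivial
      · rw [if_neg h, xiPred]
        refine (sat_closeAll C _).mpr fun ρ => ?_
        rw [sat_conj]
        intro φ hφ
        rw [List.mem_map] at hφ
        obtain ⟨t', -, rfl⟩ := hφ
        rw [sat_imp, sat_nodeTuple]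
        intro hpre
        have hft : f ∘ ρ = t' :=
          funext fun j => (hnode C f ⟨hsurj, hval⟩ (ρ j) (t' j)).mpr (hpre j)
        rw [sat_charFml]
        have h2 := hval p ρ
        rw [hft] at h2
        exact h2
  · intro hsat
    rw [SatC, sat_and] at hsat
    obtain ⟨hF, hxi⟩ := hsat
    rw [xi, sat_and, sat_and, sat_and] at hxi
    obtain ⟨hA, hB, hCn, hD⟩ := hxi
    -- (A) every abstract node has a concrete witness
    have hEx : ∀ u : S.U, ∃ w : C.U, C.Sat (fun _ => w) (node u) := by
      intro u
      rw [sat_conj] at hA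
      have := hA _ (List.mem_map.mpr ⟨u,
        Finset.mem_toList.mpr (Finset.mem_univ u), rfl⟩)
      rw [existsNode] at this
      obtain ⟨m, hm⟩ := this
      rw [sat_map] at hm
      exact ⟨m, hm⟩
    -- (B) totality
    have hTot : ∀ w : C.U, ∃ u : S.U, C.Sat (fun _ => w) (node u) := by
      intro w
      rw [xiTotal, sat_all] at hB
      have := hB w
      rw [sat_disj] at this
      obtain ⟨φ, hφ, hs⟩ := this
      rw [List.mem_map] at hφ
      obtain ⟨u, -, rfl⟩ := hφ
      rw [sat_map] at hs
      exact ⟨u, hs⟩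
    -- (D) predicate conjuncts, unpacked
    have hPred : ∀ p : σ.rel, σ.ar p ≠ 0 →
        ∀ (t : Fin (σ.ar p) → C.U) (us : Fin (σ.ar p) → S.U),
          (∀ j, C.Sat (fun _ => t j) (node (us j))) →
          TV.le (C.tv p t) (S.ι p us) := by
      intro p hp t us hts
      rw [xiPredAll, sat_conj] at hD
      have h1 := hD _ (List.mem_map.mpr ⟨p,
        Finset.mem_toList.mpr (Finset.mem_univ p), rfl⟩)
      rw [if_neg hp, xiPred] at h1
      have h2 := (sat_closeAll C _).mp h1 t
      rw [sat_conj] at h2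
      have h3 := h2 _ (List.mem_map.mpr ⟨us,
        Finset.mem_toList.mpr (Finset.mem_univ us), rfl⟩)
      rw [sat_imp, sat_nodeTuple] at h3
      have h4 := h3 hts
      rw [sat_charFml] at h4
      exact h4
    -- mutual exclusivity, via the equality conjunct
    have hUniq : ∀ (w : C.U) (u1 u2 : S.U),
        C.Sat (fun _ => w) (node u1) → C.Sat (fun _ => w) (node u2) →
        u1 = u2 := by
      intro w u1 u2 h1 h2
      by_contra hne
      have hp : σ.ar σ.eqr ≠ 0 := by rw [σ.eq_ar]; omega
      have hle := hPred σ.eqr hp (pair w w) (pair u1 u2) ?_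
      · rw [S.eq_ne u1 u2 hne] at hle
        have heq : C.ι σ.eqr (pair w w) = true := (C.eq_iff w w).mpr rfl
        rw [Str2.tv, heq] at hle
        simp [TV.le] at hle
      · intro j
        by_cases hj : (j : ℕ) = 0
        · have e1 : pair (n := σ.ar σ.eqr) w w j = w := by simp [pair, hj]
          have e2 : pair (n := σ.ar σ.eqr) u1 u2 j = u1 := by simp [pair, hj]
          rw [e1, e2]; exact h1
        · have e1 : pair (n := σ.ar σ.eqr) w w j = w := by simp [pair, hj]
          have e2 : pair (n := σ.ar σ.eqr) u1 u2 j = u2 := by simp [pair, hj]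
          rw [e1, e2]; exact h2
    choose f hf using hTot
    have hsurj : Function.Surjective f := by
      intro u
      obtain ⟨w, hw⟩ := hEx u
      exact ⟨w, hUniq w (f w) u (hf w) hw⟩
    have hval : ∀ (r : σ.rel) (t : Fin (σ.ar r) → C.U),
        TV.le (C.tv r t) (S.ι r (f ∘ t)) := by
      intro r t
      by_cases h : σ.ar r = 0
      · rw [xiNullary, sat_conj] at hCn
        have h1 := hCn _ (List.mem_map.mpr ⟨r,
          Finset.mem_toList.mpr (Finset.mem_univ r), rfl⟩)
        rw [dif_pos h, sat_charFml] at h1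
        rw [empty_tuple_eq h (f ∘ t) (fun i => Fin.elim0 (Fin.cast h i)),
          empty_tuple_eq h t ((fun x : Empty => x.elim) ∘
            fun i => Fin.elim0 (Fin.cast h i))]
        exact h1
      · exact hPred r h t (f ∘ t) (fun j => hf (t j))
    exact ⟨⟨f, hsurj, hval⟩, hF⟩
end HeapAbs
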